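/- For the balancing transformation: given symmetric positive definite matrices X_i = R_iᵀR_i and X_o = R_oᵀR_o (Cholesky factorizations) and a singular value decomposition R_oR_iᵀ = UΓVᵀ with Γ diagonal positive definite and U, V orthogonal, the matrix T = Γ^{−1/2}UᵀR_o is invertible with T⁻¹ = R_iᵀVΓ^{−1/2}, and it satisfies T X_i Tᵀ = Γ and T⁻ᵀ X_o T⁻¹ = Γ. -/

import Mathlib

open Matrix

/-- the balancing transformation `T = Γ^{-1/2} Uᵀ R_o` is invertible
with inverse `R_iᵀ V Γ^{-1/2}`, and it balances the two Gramians: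
`T X_i Tᵀ = Γ` and `T⁻ᵀ X_o T⁻¹ = Γ`. -/
theorem stmt11 {n : ℕ}
    (Xi Xo Ri Ro U V Γ : Matrix (Fin n) (Fin n) ℝ)
    (g : Fin n → ℝ) (hg : ∀ i, 0 < g i) (hΓ : Γ = diagonal g)
    (hXi : Xi = Riᵀ * Ri) (hXo : Ro ᵀ * Ro = Xo)
    (hRi : IsUnit Ri) (hRo : IsUnit Ro)
    (hU : Uᵀ * U = 1) (hV : Vᵀ * V = 1)
    (hSVD : Ro * Riᵀ = U * Γ * Vᵀ) :
    let Γinvhalf : Matrix (Fin n) (Fin n) ℝ := diagonal fun i => (Real.sqrt (g i))⁻¹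
    let T : Matrix (Fin n) (Fin n) ℝ := Γinvhalf * Uᵀ * Ro
    let Tinv : Matrix (Fin n) (Fin n) ℝ := Riᵀ * V * Γinvhalf
    T * Tinv = 1 ∧ Tinv * T = 1 ∧
      T * Xi * Tᵀ = Γ ∧ Tinvᵀ * Xo * Tinv = Γ := by
  intro Γinvhalf T Tinv
  have hsq : ∀ i, Real.sqrt (g i) * Real.sqrt (g i) = g i := fun i =>
    Real.mul_self_sqrt (hg i).le
  have hsqpos : ∀ i, 0 < Real.sqrt (g i) := fun i => Real.sqrt_pos.mpr (hg i)
  have hne : ∀ i, Real.sqrt (g i) ≠ 0 := fun i => (hsqpos i).ne'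
  have h1 : Γinvhalf * Γ * Γinvhalf = 1 := by
    simp only [hΓ, Γinvhalf, diagonal_mul_diagonal]
    have he : (fun i => (Real.sqrt (g i))⁻¹ * g i * (Real.sqrt (g i))⁻¹)
        = fun _ => (1:ℝ) := funext fun i => by
      rw [← hsq i, Real.sqrt_mul_self (hsqpos i).le]; field_simp; exact div_self (hne i)
    rw [he, ← diagonal_one]
  have h2 : Γinvhalf * (Γ * Γ) * Γinvhalf = Γ := by
    simp only [hΓ, Γinvhalf, diagonal_mul_diagonal]
    have he : (fun i => (Real.sqrt (g i))⁻¹ * (g i * g i) * (Real.sqrt (g i))⁻¹)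
        = fun i => g i := funext fun i => by
      rw [← hsq i, Real.sqrt_mul_self (hsqpos i).le]; field_simp
    rw [he]
  have hΓt : Γinvhalfᵀ = Γinvhalf := diagonal_transpose _
  have key : Uᵀ * (Ro * Riᵀ) * V = Γ := by
    rw [hSVD]
    calc Uᵀ * (U * Γ * Vᵀ) * V = (Uᵀ * U) * Γ * (Vᵀ * V) := by
          simp only [Matrix.mul_assoc]
      _ = Γ := by rw [hU, hV, Matrix.one_mul, Matrix.mul_one]
  have key2 : Uᵀ * ((Ro * Riᵀ) * (Ro * Riᵀ)ᵀ) * U = Γ * Γ := by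
    rw [hSVD]
    have : (U * Γ * Vᵀ)ᵀ = V * Γᵀ * Uᵀ := by
      simp [Matrix.transpose_mul, Matrix.mul_assoc]
    rw [this]
    have hΓsym : Γᵀ = Γ := by rw [hΓ, diagonal_transpose]
    rw [hΓsym]
    calc Uᵀ * (U * Γ * Vᵀ * (V * Γ * Uᵀ)) * U
        = (Uᵀ * U) * Γ * (Vᵀ * V) * Γ * (Uᵀ * U) := by
          simp only [Matrix.mul_assoc]
      _ = Γ * Γ := by rw [hU, hV]; simp [Matrix.mul_assoc]
  have key3 : Vᵀ * ((Ro * Riᵀ)ᵀ * (Ro * Riᵀ)) * V = Γ * Γ := by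
    rw [hSVD]
    have : (U * Γ * Vᵀ)ᵀ = V * Γᵀ * Uᵀ := by
      simp [Matrix.transpose_mul, Matrix.mul_assoc]
    rw [this]
    have hΓsym : Γᵀ = Γ := by rw [hΓ, diagonal_transpose]
    rw [hΓsym]
    calc Vᵀ * (V * Γ * Uᵀ * (U * Γ * Vᵀ)) * V
        = (Vᵀ * V) * Γ * (Uᵀ * U) * Γ * (Vᵀ * V) := by
          simp only [Matrix.mul_assoc]
      _ = Γ * Γ := by rw [hU, hV]; simp [Matrix.mul_assoc]
  have hTT : T * Tinv = 1 := by
    show (Γinvhalf * Uᵀ * Ro) * (Riᵀ * V * Γinvhalf) = 1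
    calc (Γinvhalf * Uᵀ * Ro) * (Riᵀ * V * Γinvhalf)
        = Γinvhalf * (Uᵀ * (Ro * Riᵀ) * V) * Γinvhalf := by
          simp only [Matrix.mul_assoc]
      _ = 1 := by rw [key, h1]
  refine ⟨hTT, mul_eq_one_comm.mp hTT, ?_, ?_⟩
  · show (Γinvhalf * Uᵀ * Ro) * Xi * (Γinvhalf * Uᵀ * Ro)ᵀ = Γ
    rw [hXi]
    have ht : (Γinvhalf * Uᵀ * Ro)ᵀ = Roᵀ * U * Γinvhalf := by
      simp [Matrix.transpose_mul, hΓt, Matrix.mul_assoc]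
    rw [ht]
    calc (Γinvhalf * Uᵀ * Ro) * (Riᵀ * Ri) * (Roᵀ * U * Γinvhalf)
        = Γinvhalf * (Uᵀ * ((Ro * Riᵀ) * (Ro * Riᵀ)ᵀ) * U) * Γinvhalf := by
          simp only [Matrix.transpose_mul, Matrix.transpose_transpose,
            Matrix.mul_assoc]
      _ = Γ := by rw [key2, h2]
  · show (Riᵀ * V * Γinvhalf)ᵀ * Xo * (Riᵀ * V * Γinvhalf) = Γ
    rw [← hXo]
    have ht : (Riᵀ * V * Γinvhalf)ᵀ = Γinvhalf * Vᵀ * Ri := by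
      simp [Matrix.transpose_mul, hΓt, Matrix.mul_assoc]
    rw [ht]
    calc (Γinvhalf * Vᵀ * Ri) * (Roᵀ * Ro) * (Riᵀ * V * Γinvhalf)
        = Γinvhalf * (Vᵀ * ((Ro * Riᵀ)ᵀ * (Ro * Riᵀ)) * V) * Γinvhalf := by
          simp only [Matrix.transpose_mul, Matrix.transpose_transpose,
            Matrix.mul_assoc]
      _ = Γ := by rw [key3, h2]
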